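/- Let H ∈ (1/2, 1) and let (β^H(t))_{t≥0} be a real-valued fractional Brownian motion with Hurst index H. Then there exists a constant C_H ∈ (0,∞) such that for every λ ∈ (0,∞), every Δt ∈ (0,1) and every n ∈ ℕ, the discrete-time fractional Ornstein–Uhlenbeck approximation 𝒵_n^{H,λ} = Σ_{j=0}^{n−1} e^{−λ(t_n−t_j)} (β^H(t_{j+1}) − β^H(t_j)), where t_j = jΔt, satisfies E[|𝒵_n^{H,λ}|²] ≤ C_H λ^{−2H}. -/

import Mathlib

open MeasureTheory Finset
open scoped NNReal

/-- The discrete-time approximation of the fractional Ornstein–Uhlenbeck process on the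
uniform grid `t_j = j Δt`:
`𝒵_n^{H,λ} = Σ_{j=0}^{n-1} exp(-λ(t_n - t_j)) (β(t_{j+1}) - β(t_j))`. -/
noncomputable def fracOUdisc {Ω : Type*} (β : ℝ → Ω → ℝ) (lam Δt : ℝ) (n : ℕ) (ω : Ω) : ℝ :=
  ∑ j ∈ Finset.range n,
    Real.exp (-(lam * ((n : ℝ) * Δt - (j : ℝ) * Δt)))
      * (β (((j : ℝ) + 1) * Δt) ω - β ((j : ℝ) * Δt) ω)



lemma mul_integrable' {Ω : Type*} [MeasurableSpace Ω] {μ : Measure Ω} {f g : Ω → ℝ}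
    (hf : MemLp f 2 μ) (hg : MemLp g 2 μ) : Integrable (fun ω => f ω * g ω) μ := by
  have h1 := (hf.add hg).integrable_sq
  have h2 := hf.integrable_sq
  have h3 := hg.integrable_sq
  have heq : (fun ω => f ω * g ω)
      = fun ω => (((f + g) ω) ^ 2 - (f ω) ^ 2 - (g ω) ^ 2) / 2 := by
    funext ω; simp [Pi.add_apply]; ring
  rw [heq]
  exact (((h1.sub h2).sub h3).div_const 2)

lemma csum' (a : ℕ → ℝ) (n : ℕ) :
    ∑ j ∈ range (n+1), (a j - if j = 0 then 0 else a (j-1)) = a n := by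
  rw [Finset.sum_range_succ' (fun j => a j - if j = 0 then 0 else a (j-1)) n]
  simp only [Nat.succ_ne_zero, if_false, Nat.add_sub_cancel, if_true, sub_zero]
  have := Finset.sum_range_sub (fun i => a i) n
  simp only [this]
  ring

lemma abel_sum' (a B : ℕ → ℝ) (n : ℕ) :
    ∑ j ∈ range n, a j * (B (j+1) - B j)
      = ∑ j ∈ range n, (a j - if j = 0 then 0 else a (j-1)) * (B n - B j) := by
  induction n with
  | zero => simp
  | succ n ih =>
    rw [Finset.sum_range_succ, ih]
    have expand : ∀ j, (a j - if j = 0 then 0 else a (j-1)) * (B (n+1) - B j)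
        = (a j - if j = 0 then 0 else a (j-1)) * (B n - B j)
          + (a j - if j = 0 then 0 else a (j-1)) * (B (n+1) - B n) := by
      intro j; ring
    calc ∑ j ∈ range n, (a j - if j = 0 then 0 else a (j-1)) * (B n - B j)
          + a n * (B (n+1) - B n)
        = ∑ j ∈ range (n+1), (a j - if j = 0 then 0 else a (j-1)) * (B n - B j)
          + (∑ j ∈ range (n+1), (a j - if j = 0 then 0 else a (j-1))) * (B (n+1) - B n) := by
          rw [csum' a n, Finset.sum_range_succ]; ring
      _ = ∑ j ∈ range (n+1), ((a j - if j = 0 then 0 else a (j-1)) * (B n - B j)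
            + (a j - if j = 0 then 0 else a (j-1)) * (B (n+1) - B n)) := by
          rw [Finset.sum_add_distrib, Finset.sum_mul]
      _ = ∑ j ∈ range (n+1), (a j - if j = 0 then 0 else a (j-1)) * (B (n+1) - B j) := by
          exact Finset.sum_congr rfl (fun j _ => (expand j).symm)

lemma rpow_le_one_add' {x H : ℝ} (hx : 0 ≤ x) (hH0 : 0 < H) (hH1 : H ≤ 1) :
    x ^ H ≤ 1 + x := by
  rcases le_or_gt x 1 with h | h
  · have := Real.rpow_le_one hx h hH0.le
    linarith
  · have h2 : x ^ H ≤ x ^ (1:ℝ) := Real.rpow_le_rpow_of_exponent_le h.le hH1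
    rw [Real.rpow_one] at h2
    linarith

lemma rpow_exp_le' {y H : ℝ} (hy : 0 ≤ y) (hH0 : 0 < H) (hH1 : H ≤ 1) :
    y ^ H * Real.exp (-y) ≤ 2 * Real.exp (-(y/2)) := by
  have h1 : y ^ H ≤ 2 * Real.exp (y/2) := by
    have := Real.add_one_le_exp (y/2)
    have h2 := rpow_le_one_add' hy hH0 hH1
    nlinarith [Real.exp_pos (y/2)]
  have h3 : (0:ℝ) < Real.exp (-y) := Real.exp_pos _
  calc y ^ H * Real.exp (-y) ≤ 2 * Real.exp (y/2) * Real.exp (-y) :=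
        mul_le_mul_of_nonneg_right h1 h3.le
    _ = 2 * Real.exp (-(y/2)) := by rw [mul_assoc, ← Real.exp_add]; ring_nf

lemma sub_rpow_le' {a b H : ℝ} (hb : 0 ≤ b) (hab : b ≤ a) (hH0 : 0 < H) (hH1 : H ≤ 1) :
    a ^ H ≤ (a - b) ^ H + b ^ H := by
  have hab' : 0 ≤ a - b := sub_nonneg.2 hab
  have key := NNReal.rpow_add_le_add_rpow (a - b).toNNReal b.toNNReal hH0.le hH1
  have h1 : ((a-b).toNNReal + b.toNNReal : ℝ≥0) = a.toNNReal := by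
    ext
    simp [Real.coe_toNNReal _ hab', Real.coe_toNNReal _ hb,
      Real.coe_toNNReal _ (hb.trans hab)]
  rw [h1] at key
  calc a ^ H = ((a.toNNReal ^ H : ℝ≥0) : ℝ) := by
        rw [NNReal.coe_rpow, Real.coe_toNNReal _ (hb.trans hab)]
    _ ≤ (((a-b).toNNReal ^ H + b.toNNReal ^ H : ℝ≥0) : ℝ) := by exact_mod_cast key
    _ = (a - b) ^ H + b ^ H := by
        rw [NNReal.coe_add, NNReal.coe_rpow, NNReal.coe_rpow,
          Real.coe_toNNReal _ hab', Real.coe_toNNReal _ hb]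

lemma cov_ineq' {a b H : ℝ} (ha : 0 ≤ a) (hb : 0 ≤ b) (hH0 : 0 < H) (hH1 : H ≤ 1) :
    a ^ (2*H) + b ^ (2*H) - |a - b| ^ (2*H) ≤ 2 * (a ^ H * b ^ H) := by
  have key : ∀ u v : ℝ, 0 ≤ v → v ≤ u →
      u ^ (2*H) + v ^ (2*H) - |u - v| ^ (2*H) ≤ 2 * (u ^ H * v ^ H) := by
    intro u v hv hvu
    have huv : 0 ≤ u - v := sub_nonneg.2 hvu
    have hu : 0 ≤ u := hv.trans hvu
    rw [abs_of_nonneg huv]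
    have h1 : u ^ H - v ^ H ≤ (u - v) ^ H := by
      have := sub_rpow_le' hv hvu hH0 hH1; linarith
    have h2 : 0 ≤ u ^ H - v ^ H := by
      have := Real.rpow_le_rpow hv hvu hH0.le; linarith
    have h3 : (u ^ H - v ^ H)^2 ≤ ((u-v) ^ H)^2 := by nlinarith [Real.rpow_nonneg huv H]
    have e1 : (u ^ H)^2 = u ^ (2*H) := by
      rw [← Real.rpow_natCast (u ^ H) 2, ← Real.rpow_mul hu]; norm_num; ring_nf
    have e2 : (v ^ H)^2 = v ^ (2*H) := by
      rw [← Real.rpow_natCast (v ^ H) 2, ← Real.rpow_mul hv]; norm_num; ring_nf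
    have e3 : ((u-v) ^ H)^2 = (u-v) ^ (2*H) := by
      rw [← Real.rpow_natCast ((u-v) ^ H) 2, ← Real.rpow_mul huv]; norm_num; ring_nf
    nlinarith
  rcases le_total b a with h | h
  · exact key a b hb h
  · have := key b a ha h
    rw [abs_sub_comm] at this
    linarith

lemma term_bound' {lam T H : ℝ} (hlam : 0 < lam) (hT : 0 ≤ T) (hH0 : 0 < H) (hH1 : H ≤ 1) :
    Real.exp (-(lam * T)) * T ^ H ≤ 2 * lam ^ (-H) * Real.exp (-(lam * T / 2)) := by
  have hy : 0 ≤ lam * T := by positivity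
  have hkey := rpow_exp_le' hy hH0 hH1
  have hmul : (lam * T) ^ H = lam ^ H * T ^ H := Real.mul_rpow hlam.le hT
  have hlH : 0 < lam ^ H := Real.rpow_pos_of_pos hlam _
  have hrlam : lam ^ (-H) = (lam ^ H)⁻¹ := Real.rpow_neg hlam.le H
  rw [hmul] at hkey
  rw [hrlam]
  calc Real.exp (-(lam * T)) * T ^ H
      = (lam ^ H * T ^ H * Real.exp (-(lam * T))) * (lam ^ H)⁻¹ := by
        field_simp
    _ ≤ (2 * Real.exp (-(lam * T / 2))) * (lam ^ H)⁻¹ :=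
        mul_le_mul_of_nonneg_right hkey (by positivity)
    _ = 2 * (lam ^ H)⁻¹ * Real.exp (-(lam * T / 2)) := by ring

lemma cov_eval {Ω : Type*} [MeasurableSpace Ω] (μ : Measure Ω) (H : ℝ) (β : ℝ → Ω → ℝ)
    (hL2 : ∀ t : ℝ, 0 ≤ t → MemLp (β t) 2 μ)
    (hcov : ∀ t s : ℝ, 0 ≤ t → 0 ≤ s →
      ∫ ω, β t ω * β s ω ∂μ = (t ^ (2*H) + s ^ (2*H) - |t - s| ^ (2*H)) / 2)
    (h2H : (2*H) ≠ 0)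
    {T s u : ℝ} (hs : 0 ≤ s) (hsT : s ≤ T) (hu : 0 ≤ u) (huT : u ≤ T) :
    ∫ ω, (β T ω - β s ω) * (β T ω - β u ω) ∂μ
      = ((T-s) ^ (2*H) + (T-u) ^ (2*H) - |s-u| ^ (2*H)) / 2 := by
  have hT : 0 ≤ T := hs.trans hsT
  have iTT := mul_integrable' (hL2 T hT) (hL2 T hT)
  have iTu := mul_integrable' (hL2 T hT) (hL2 u hu)
  have isT := mul_integrable' (hL2 s hs) (hL2 T hT)
  have isu := mul_integrable' (hL2 s hs) (hL2 u hu)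
  have hpt : ∀ ω, (β T ω - β s ω) * (β T ω - β u ω)
      = β T ω * β T ω - β T ω * β u ω - β s ω * β T ω + β s ω * β u ω := fun ω => by ring
  simp only [hpt]
  have h1 : Integrable (fun ω => β T ω * β T ω - β T ω * β u ω) μ := iTT.sub iTu
  have h2 : Integrable (fun ω => β T ω * β T ω - β T ω * β u ω - β s ω * β T ω) μ := h1.sub isT
  rw [integral_add h2 isu, integral_sub h1 isT,
    integral_sub iTT iTu, hcov T T hT hT, hcov T u hT hu, hcov s T hs hT, hcov s u hs hu,
    sub_self T, abs_zero, Real.zero_rpow h2H,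
    abs_of_nonneg (sub_nonneg.2 huT), abs_sub_comm s T, abs_of_nonneg (sub_nonneg.2 hsT)]
  ring


set_option maxHeartbeats 1000000 in
lemma scalar_bound (H lam Δt : ℝ) (hH0 : 0 < H) (hH1 : H ≤ 1)
    (hlam : 0 < lam) (hΔ0 : 0 < Δt) (n : ℕ) :
    ∑ j ∈ Finset.range n,
      ((Real.exp (-(lam * ((n:ℝ)*Δt - (j:ℝ)*Δt))) -
         if j = 0 then (0:ℝ) else Real.exp (-(lam * ((n:ℝ)*Δt - ((j-1:ℕ):ℝ)*Δt))))
        * ((n:ℝ)*Δt - (j:ℝ)*Δt) ^ H) ≤ 6 * lam ^ (-H) := by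
  have hlamH : 0 < lam ^ (-H) := Real.rpow_pos_of_pos hlam _
  rcases Nat.eq_zero_or_pos n with rfl | hn
  · simp only [Finset.range_zero, Finset.sum_empty]; positivity
  obtain ⟨k, rfl⟩ : ∃ k, n = k + 1 := ⟨n-1, (Nat.succ_pred_eq_of_pos hn).symm⟩
  rw [Finset.sum_range_succ']
  obtain ⟨x, hxdef⟩ : ∃ x : ℝ, x = lam * Δt := ⟨_, rfl⟩
  have hx : 0 < x := by rw [hxdef]; positivity
  obtain ⟨r, hrdef⟩ : ∃ r : ℝ, r = Real.exp (-(x/2)) := ⟨_, rfl⟩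
  have hr0 : 0 < r := by rw [hrdef]; exact Real.exp_pos _
  have hr1 : r < 1 := by rw [hrdef, Real.exp_lt_one_iff]; linarith
  have hrsq : r^2 = Real.exp (-x) := by
    rw [hrdef, ← Real.exp_nat_mul]; congr 1; push_cast; ring
  have hT : (0:ℝ) ≤ ((k+1:ℕ):ℝ) * Δt := by positivity
  -- term j = 0
  have h0 : (Real.exp (-(lam * (((k+1:ℕ)):ℝ)*Δt - (((0:ℕ)):ℝ)*Δt)) : ℝ) = 0 → True := fun _ => trivial
  have hzero : ((Real.exp (-(lam * (((k+1:ℕ):ℝ)*Δt - ((0:ℕ):ℝ)*Δt))) -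
         if (0:ℕ) = 0 then (0:ℝ) else Real.exp (-(lam * (((k+1:ℕ):ℝ)*Δt - ((0-1:ℕ):ℝ)*Δt))))
        * (((k+1:ℕ):ℝ)*Δt - ((0:ℕ):ℝ)*Δt) ^ H) ≤ 2 * lam ^ (-H) := by
    simp only [reduceIte, Nat.cast_zero, zero_mul, sub_zero]
    have hkey := term_bound' hlam hT hH0 hH1
    have he1 : Real.exp (-(lam * (((k+1:ℕ):ℝ) * Δt) / 2)) ≤ 1 :=
      Real.exp_le_one_iff.2 (by nlinarith)
    nlinarith [hkey, hlamH]
  -- terms j = i+1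
  have hterm : ∀ i ∈ Finset.range k,
      ((Real.exp (-(lam * (((k+1:ℕ):ℝ)*Δt - ((i+1:ℕ):ℝ)*Δt))) -
         if (i+1:ℕ) = 0 then (0:ℝ)
         else Real.exp (-(lam * (((k+1:ℕ):ℝ)*Δt - ((i+1-1:ℕ):ℝ)*Δt))))
        * (((k+1:ℕ):ℝ)*Δt - ((i+1:ℕ):ℝ)*Δt) ^ H)
      ≤ (4 * lam ^ (-H) * (1-r)) * r^(k-i) := by
    intro i hi
    rw [Finset.mem_range] at hi
    have hmcast : ((k-i:ℕ):ℝ) = (k:ℝ) - (i:ℝ) := by exact_mod_cast Nat.cast_sub hi.le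
    simp only [Nat.succ_ne_zero, reduceIte, Nat.add_sub_cancel]
    have e1 : ((k+1:ℕ):ℝ) * Δt - ((i+1:ℕ):ℝ) * Δt = ((k-i:ℕ):ℝ) * Δt := by
      push_cast [hmcast]; ring
    have e3 : ((k+1:ℕ):ℝ) * Δt - ((i:ℕ):ℝ) * Δt = ((k-i:ℕ):ℝ) * Δt + Δt := by
      push_cast [hmcast]; ring
    rw [e1, e3, show k - i = (k-i:ℕ) from rfl]
    generalize hmg : k - i = m
    have hkey := term_bound' hlam (show (0:ℝ) ≤ (m:ℝ)*Δt by positivity) hH0 hH1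
    have hB : Real.exp (-(lam*((m:ℝ)*Δt + Δt))) = Real.exp (-(lam*((m:ℝ)*Δt))) * Real.exp (-x) := by
      rw [← Real.exp_add]; congr 1; rw [hxdef]; ring
    have hrm : Real.exp (-(lam * ((m:ℝ)*Δt) / 2)) = r ^ m := by
      rw [hrdef, ← Real.exp_nat_mul]; congr 1; rw [hxdef]; ring
    rw [hB]
    have hexpnn : (0:ℝ) ≤ Real.exp (-(lam*((m:ℝ)*Δt))) := (Real.exp_pos _).le
    have h1mxnn : (0:ℝ) ≤ 1 - Real.exp (-x) := by nlinarith [hrsq, hr0, hr1]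
    calc (Real.exp (-(lam*((m:ℝ)*Δt))) - Real.exp (-(lam*((m:ℝ)*Δt))) * Real.exp (-x)) * ((m:ℝ)*Δt) ^ H
        = (1 - Real.exp (-x)) * (Real.exp (-(lam*((m:ℝ)*Δt))) * ((m:ℝ)*Δt) ^ H) := by ring
      _ ≤ (1 - Real.exp (-x)) * (2 * lam ^ (-H) * Real.exp (-(lam * ((m:ℝ)*Δt) / 2))) :=
          mul_le_mul_of_nonneg_left hkey h1mxnn
      _ = ((1-r)*(1+r)) * (2 * lam ^ (-H) * r ^ m) := by rw [hrm, ← hrsq]; ring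
      _ ≤ (4 * lam ^ (-H) * (1-r)) * r ^ m := by
          nlinarith [mul_nonneg (mul_nonneg hlamH.le (pow_nonneg hr0.le m))
            (mul_self_nonneg (1-r)), hlamH, pow_nonneg hr0.le m, hr0, hr1]
  have hsum2 : ∑ i ∈ Finset.range k,
      ((Real.exp (-(lam * (((k+1:ℕ):ℝ)*Δt - ((i+1:ℕ):ℝ)*Δt))) -
         if (i+1:ℕ) = 0 then (0:ℝ)
         else Real.exp (-(lam * (((k+1:ℕ):ℝ)*Δt - ((i+1-1:ℕ):ℝ)*Δt))))
        * (((k+1:ℕ):ℝ)*Δt - ((i+1:ℕ):ℝ)*Δt) ^ H) ≤ 4 * lam ^ (-H) := by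
    have hb := Finset.sum_le_sum hterm
    have hrefl : ∑ i ∈ Finset.range k, r^(k-i) = ∑ i ∈ Finset.range k, r^(i+1) := by
      rw [← Finset.sum_range_reflect (fun i => r^(i+1)) k]
      refine Finset.sum_congr rfl fun j hj => ?_
      rw [Finset.mem_range] at hj
      congr 1
      omega
    have hgeom : (1-r) * ∑ i ∈ Finset.range k, r^i = 1 - r^k := by
      have h := geom_sum_mul r k
      linear_combination -h
    have hsum_pow : ∑ i ∈ Finset.range k, r^(i+1) = r * ∑ i ∈ Finset.range k, r^i := by
      rw [Finset.mul_sum]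
      exact Finset.sum_congr rfl fun i _ => by ring
    have hrk : (0:ℝ) ≤ r^k := by positivity
    have hgnn : (0:ℝ) ≤ ∑ i ∈ Finset.range k, r^i :=
      Finset.sum_nonneg fun i _ => by positivity
    have hchain : ∑ i ∈ Finset.range k, (4 * lam ^ (-H) * (1-r)) * r^(k-i) ≤ 4 * lam ^ (-H) := by
      calc ∑ i ∈ Finset.range k, (4 * lam ^ (-H) * (1-r)) * r^(k-i)
          = (4 * lam ^ (-H)) * ((1-r) * (r * ∑ i ∈ Finset.range k, r^i)) := by
            rw [← Finset.mul_sum, hrefl, hsum_pow]; ring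
        _ = (4 * lam ^ (-H)) * (r * (1 - r^k)) := by rw [← hgeom]; ring
        _ ≤ 4 * lam ^ (-H) := by
            nlinarith [hlamH, hr0, hr1, hrk, mul_nonneg hr0.le hrk]
    exact hb.trans hchain
  calc _ ≤ 4 * lam ^ (-H) + 2 * lam ^ (-H) := add_le_add hsum2 hzero
    _ = 6 * lam ^ (-H) := by ring

lemma scalar_nonneg (H lam Δt : ℝ) (hH0 : 0 < H)
    (hlam : 0 < lam) (hΔ0 : 0 < Δt) (n : ℕ) :
    0 ≤ ∑ j ∈ Finset.range n,
      ((Real.exp (-(lam * ((n:ℝ)*Δt - (j:ℝ)*Δt))) -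
         if j = 0 then (0:ℝ) else Real.exp (-(lam * ((n:ℝ)*Δt - ((j-1:ℕ):ℝ)*Δt))))
        * ((n:ℝ)*Δt - (j:ℝ)*Δt) ^ H) := by
  refine Finset.sum_nonneg fun j hj => mul_nonneg ?_ ?_
  · rw [Finset.mem_range] at hj
    rcases Nat.eq_zero_or_pos j with rfl | hpos
    · simp only [reduceIte, sub_zero]; positivity
    · rw [if_neg hpos.ne']
      apply sub_nonneg.2
      apply Real.exp_le_exp.2
      have h1 : ((j-1:ℕ):ℝ) ≤ (j:ℝ) := by exact_mod_cast Nat.sub_le j 1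
      have h2 : ((j-1:ℕ):ℝ) * Δt ≤ (j:ℝ) * Δt := mul_le_mul_of_nonneg_right h1 hΔ0.le
      nlinarith [hlam.le]
  · rw [Finset.mem_range] at hj
    have h1 : (j:ℝ) ≤ (n:ℝ) := Nat.cast_le.2 hj.le
    have h2 : (j:ℝ) * Δt ≤ (n:ℝ) * Δt := mul_le_mul_of_nonneg_right h1 hΔ0.le
    apply Real.rpow_nonneg
    linarith

set_option maxHeartbeats 1000000 in
/-- Moment bound for the discrete-time fractional Ornstein–Uhlenbeck approximation, case
`H ∈ (1/2,1)`: there is `C_H ∈ (0,∞)` such that `E[|𝒵_n^{H,λ}|²] ≤ C_H λ^{-2H}` for all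
`λ > 0`, `Δt ∈ (0,1)` and `n ∈ ℕ`. -/
theorem stmt11
    {Ω : Type*} [MeasurableSpace Ω] (μ : Measure Ω) [IsProbabilityMeasure μ]
    (H : ℝ) (hH : H ∈ Set.Ioo (1/2 : ℝ) 1)
    (β : ℝ → Ω → ℝ)
    (hmeas : ∀ t : ℝ, AEStronglyMeasurable (β t) μ)
    (hpath : ∀ᵐ ω ∂μ, ContinuousOn (fun t => β t ω) (Set.Ici 0) ∧ β 0 ω = 0)
    (hL2 : ∀ t : ℝ, 0 ≤ t → MemLp (β t) 2 μ)
    (hmean : ∀ t : ℝ, 0 ≤ t → ∫ ω, β t ω ∂μ = 0)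
    (hcov : ∀ t s : ℝ, 0 ≤ t → 0 ≤ s →
      ∫ ω, β t ω * β s ω ∂μ = (t ^ (2*H) + s ^ (2*H) - |t - s| ^ (2*H)) / 2) :
    ∃ C : ℝ, 0 < C ∧ ∀ lam : ℝ, 0 < lam → ∀ Δt ∈ Set.Ioo (0:ℝ) 1, ∀ n : ℕ,
      ∫ ω, (fracOUdisc β lam Δt n ω) ^ 2 ∂μ ≤ C * lam ^ (-(2*H)) := by
  obtain ⟨hHhalf, hHone⟩ := hH
  have hH0 : 0 < H := by linarith
  have hH1 : H ≤ 1 := hHone.le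
  have h2H : (2*H) ≠ 0 := by positivity
  refine ⟨36, by norm_num, ?_⟩
  rintro lam hlam Δt ⟨hΔ0, hΔ1⟩ n
  have hlamH : 0 < lam ^ (-H) := Real.rpow_pos_of_pos hlam _
  obtain ⟨a, ha⟩ : ∃ a : ℕ → ℝ,
      a = fun j : ℕ => Real.exp (-(lam * ((n:ℝ) * Δt - (j:ℝ) * Δt))) := ⟨_, rfl⟩
  obtain ⟨c, hc⟩ : ∃ c : ℕ → ℝ,
      c = fun j => a j - (if j = 0 then 0 else a (j-1)) := ⟨_, rfl⟩
  obtain ⟨d, hd⟩ : ∃ d : ℕ → ℝ,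
      d = fun j : ℕ => ((n:ℝ) * Δt - (j:ℝ) * Δt) ^ H := ⟨_, rfl⟩
  obtain ⟨X, hX⟩ : ∃ X : ℕ → Ω → ℝ,
      X = fun (j : ℕ) ω => β ((n:ℝ)*Δt) ω - β ((j:ℝ)*Δt) ω := ⟨_, rfl⟩
  have hT : (0:ℝ) ≤ (n:ℝ) * Δt := by positivity
  have ht0 : ∀ j : ℕ, (0:ℝ) ≤ (j:ℝ)*Δt := fun j => by positivity
  have htle : ∀ j : ℕ, j < n → (j:ℝ)*Δt ≤ (n:ℝ)*Δt := by
    intro j hj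
    have h1 : (j:ℝ) ≤ (n:ℝ) := Nat.cast_le.2 hj.le
    nlinarith
  have hXmem : ∀ j : ℕ, MemLp (X j) 2 μ := by
    intro j; rw [hX]; exact (hL2 _ hT).sub (hL2 _ (ht0 j))
  have hXint : ∀ i j : ℕ, Integrable (fun ω => X i ω * X j ω) μ :=
    fun i j => mul_integrable' (hXmem i) (hXmem j)
  have hcnn : ∀ j : ℕ, 0 ≤ c j := by
    intro j
    rcases Nat.eq_zero_or_pos j with h0 | hpos
    · subst h0; simp only [hc, ha, reduceIte, sub_zero]; positivity
    · have hj : j ≠ 0 := hpos.ne'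
      simp only [hc, ha, if_neg hj]
      apply sub_nonneg.2
      apply Real.exp_le_exp.2
      have h1 : ((j-1:ℕ):ℝ) ≤ (j:ℝ) := by exact_mod_cast Nat.sub_le j 1
      have h2 : ((j-1:ℕ):ℝ) * Δt ≤ (j:ℝ) * Δt := mul_le_mul_of_nonneg_right h1 hΔ0.le
      have h3 : (n:ℝ)*Δt - (j:ℝ)*Δt ≤ (n:ℝ)*Δt - ((j-1:ℕ):ℝ)*Δt := by linarith
      have h4 := mul_le_mul_of_nonneg_left h3 hlam.le
      linarith
  have hdnn : ∀ j : ℕ, j < n → 0 ≤ d j := by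
    intro j hj
    rw [hd]
    exact Real.rpow_nonneg (by have := htle j hj; linarith) H
  -- Step 1: Abel summation representation
  have hrep : ∀ ω, fracOUdisc β lam Δt n ω = ∑ j ∈ Finset.range n, c j * X j ω := by
    intro ω
    have h1 : fracOUdisc β lam Δt n ω
        = ∑ j ∈ Finset.range n,
            a j * ((fun i : ℕ => β ((i:ℝ)*Δt) ω) (j+1) - (fun i : ℕ => β ((i:ℝ)*Δt) ω) j) := by
      simp only [fracOUdisc, ha]
      refine Finset.sum_congr rfl fun j _ => ?_
      push_cast
      ring_nf
    rw [h1, abel_sum' a (fun i : ℕ => β ((i:ℝ)*Δt) ω) n]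
    refine Finset.sum_congr rfl fun j _ => ?_
    rw [hc, hX]
  -- Step 2: expansion of the second moment
  have hsq : ∫ ω, (fracOUdisc β lam Δt n ω)^2 ∂μ
      = ∑ i ∈ Finset.range n, ∑ j ∈ Finset.range n,
          (c i * c j) * ∫ ω, X i ω * X j ω ∂μ := by
    have h2 : ∀ ω, (fracOUdisc β lam Δt n ω)^2
        = ∑ i ∈ Finset.range n, ∑ j ∈ Finset.range n, (c i * c j) * (X i ω * X j ω) := by
      intro ω
      rw [hrep ω, sq, Finset.sum_mul_sum]
      exact Finset.sum_congr rfl fun i _ => Finset.sum_congr rfl fun j _ => by ring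
    simp_rw [h2]
    rw [integral_finset_sum _ (fun i _ =>
      integrable_finset_sum _ (fun j _ => ((hXint i j).const_mul _)))]
    refine Finset.sum_congr rfl fun i _ => ?_
    rw [integral_finset_sum _ (fun j _ => ((hXint i j).const_mul _))]
    exact Finset.sum_congr rfl fun j _ => integral_const_mul _ _
  -- Step 3: covariance bound
  have hcovle : ∀ i ∈ Finset.range n, ∀ j ∈ Finset.range n,
      ∫ ω, X i ω * X j ω ∂μ ≤ d i * d j := by
    intro i hi j hj
    rw [Finset.mem_range] at hi hj
    have hIi : (0:ℝ) ≤ (n:ℝ)*Δt - (i:ℝ)*Δt := sub_nonneg.2 (htle i hi)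
    have hIj : (0:ℝ) ≤ (n:ℝ)*Δt - (j:ℝ)*Δt := sub_nonneg.2 (htle j hj)
    have heval := cov_eval μ H β hL2 hcov h2H (ht0 i) (htle i hi) (ht0 j) (htle j hj)
    have key := cov_ineq' hIi hIj hH0 hH1
    have habs : ((n:ℝ)*Δt - (i:ℝ)*Δt) - ((n:ℝ)*Δt - (j:ℝ)*Δt) = (j:ℝ)*Δt - (i:ℝ)*Δt := by ring
    rw [habs, abs_sub_comm] at key
    rw [hX, hd]
    rw [heval]
    linarith
  -- Step 4: reduce to the square of a scalar sum
  have hdouble : ∑ i ∈ Finset.range n, ∑ j ∈ Finset.range n,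
      (c i * c j) * ∫ ω, X i ω * X j ω ∂μ ≤ (∑ j ∈ Finset.range n, c j * d j)^2 := by
    calc ∑ i ∈ Finset.range n, ∑ j ∈ Finset.range n, (c i * c j) * ∫ ω, X i ω * X j ω ∂μ
        ≤ ∑ i ∈ Finset.range n, ∑ j ∈ Finset.range n, (c i * c j) * (d i * d j) :=
          Finset.sum_le_sum fun i hi => Finset.sum_le_sum fun j hj =>
            mul_le_mul_of_nonneg_left (hcovle i hi j hj) (mul_nonneg (hcnn i) (hcnn j))
      _ = (∑ j ∈ Finset.range n, c j * d j)^2 := by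
          rw [sq, Finset.sum_mul_sum]
          exact Finset.sum_congr rfl fun i _ => Finset.sum_congr rfl fun j _ => by ring
  -- Step 5: scalar bound
  have hsum_eq : ∑ j ∈ Finset.range n, c j * d j
      = ∑ j ∈ Finset.range n,
        ((Real.exp (-(lam * ((n:ℝ)*Δt - (j:ℝ)*Δt))) -
           if j = 0 then (0:ℝ) else Real.exp (-(lam * ((n:ℝ)*Δt - ((j-1:ℕ):ℝ)*Δt))))
          * ((n:ℝ)*Δt - (j:ℝ)*Δt) ^ H) := by
    refine Finset.sum_congr rfl fun j _ => ?_
    rw [hc, hd, ha]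
  have hscalar : ∑ j ∈ Finset.range n, c j * d j ≤ 6 * lam ^ (-H) := by
    rw [hsum_eq]
    exact scalar_bound H lam Δt hH0 hH1 hlam hΔ0 n
  have hnn : 0 ≤ ∑ j ∈ Finset.range n, c j * d j := by
    rw [hsum_eq]
    exact scalar_nonneg H lam Δt hH0 hlam hΔ0 n
  have hsq2 : (∑ j ∈ Finset.range n, c j * d j)^2 ≤ (6 * lam ^ (-H))^2 :=
    pow_le_pow_left₀ hnn hscalar 2
  have hfinal : (6 * lam ^ (-H))^2 = 36 * lam ^ (-(2*H)) := by
    have h1 : (lam ^ (-H))^2 = lam ^ (-(2*H)) := by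
      rw [← Real.rpow_natCast (lam ^ (-H)) 2, ← Real.rpow_mul hlam.le]
      congr 1
      push_cast; ring
    calc (6 * lam ^ (-H))^2 = 36 * (lam ^ (-H))^2 := by ring
      _ = 36 * lam ^ (-(2*H)) := by rw [h1]
  rw [hsq]
  calc ∑ i ∈ Finset.range n, ∑ j ∈ Finset.range n, (c i * c j) * ∫ ω, X i ω * X j ω ∂μ
      ≤ (∑ j ∈ Finset.range n, c j * d j)^2 := hdouble
    _ ≤ (6 * lam ^ (-H))^2 := hsq2
    _ = 36 * lam ^ (-(2*H)) := hfinal
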